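/- arXiv:2605.14451 — 2 statements merged into one kernel-verified Lean document; each statement's English description precedes it below -/
import Mathlib

section
/- Let B ∈ ℝ^{N×N} be doubly stochastic with columns b_1,...,b_N. Then I_N − B^T B = ∑_{n<m} (b_n^T b_m)(e_n − e_m)(e_n − e_m)^T, where e_n is the n-th standard basis vector. In particular, the diagonal entry [I_N − B^T B]_{n,n} equals ∑_{m≠n} b_n^T b_m, and the off-diagonal entry [I_N − B^T B]_{n,m} equals −b_n^T b_m for n ≠ m. -/
theorem half_sum_aux {N : ℕ} (f : Fin N × Fin N → ℝ) (hsymm : ∀ n m, f (n,m) = f (m,n))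
    (hdiag : ∀ n, f (n,n) = 0) :
    ∑ q ∈ Finset.univ.filter (fun q : Fin N × Fin N => q.1 < q.2), f q +
    ∑ q ∈ Finset.univ.filter (fun q : Fin N × Fin N => q.1 < q.2), f q =
    ∑ q : Fin N × Fin N, f q := by
  have h1 : ∑ q ∈ Finset.univ.filter (fun q : Fin N × Fin N => q.1 < q.2), f q =
      ∑ q ∈ Finset.univ.filter (fun q : Fin N × Fin N => q.2 < q.1), f q := by
    apply Finset.sum_nbij' (fun q => (q.2, q.1)) (fun q => (q.2, q.1)) <;>
      simp [hsymm]
  have h2 := Finset.sum_filter_add_sum_filter_not Finset.univ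
    (fun q : Fin N × Fin N => q.1 < q.2) f
  rw [← h2]
  congr 1
  rw [h1]
  apply Finset.sum_subset
  · intro q hq
    simp at hq ⊢
    exact le_of_lt hq
  · intro q hq1 hq
    simp at hq hq1
    have he : q.1 = q.2 := le_antisymm hq hq1
    have h0 := hdiag q.1
    rw [show q = (q.1, q.1) from Prod.ext rfl he.symm]
    exact h0

theorem key_sum_aux {N : ℕ} (B : Matrix (Fin N) (Fin N) ℝ)
    (hrow : ∀ k, ∑ n, B k n = 1)
    (hcol : ∀ n, ∑ k, B k n = 1) (a b : Fin N) :
    ∑ q : Fin N × Fin N, (∑ i, B i q.1 * B i q.2) *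
        (((if a = q.1 then (1:ℝ) else 0) - if a = q.2 then 1 else 0) *
         ((if b = q.1 then (1:ℝ) else 0) - if b = q.2 then 1 else 0)) =
      2 * ((if a = b then (1:ℝ) else 0) - ∑ i, B i a * B i b) := by
  have hc1 : ∀ n : Fin N, ∑ m, ∑ i, B i n * B i m = 1 := by
    intro n
    rw [Finset.sum_comm]
    simp only [← Finset.mul_sum, hrow, mul_one, hcol]
  have hc2 : ∀ n : Fin N, ∑ m, ∑ i, B i m * B i n = 1 := by
    intro n
    simp only [mul_comm]
    exact hc1 n
  rw [Fintype.sum_prod_type]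
  have expand : ∀ n m : Fin N, (∑ i, B i n * B i m) *
        (((if a = n then (1:ℝ) else 0) - if a = m then 1 else 0) *
         ((if b = n then (1:ℝ) else 0) - if b = m then 1 else 0)) =
      ((if a = n then (1:ℝ) else 0) * (if b = n then (1:ℝ) else 0)) * (∑ i, B i n * B i m)
      - (if a = n then (1:ℝ) else 0) * ((if b = m then (1:ℝ) else 0) * (∑ i, B i n * B i m))
      - (if b = n then (1:ℝ) else 0) * ((if a = m then (1:ℝ) else 0) * (∑ i, B i n * B i m))
      + ((if a = m then (1:ℝ) else 0) * (if b = m then (1:ℝ) else 0)) * (∑ i, B i n * B i m) := by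
    intro n m; ring
  simp only [expand, Finset.sum_add_distrib, Finset.sum_sub_distrib, ← Finset.mul_sum,
    hc1, mul_one, Finset.sum_ite_eq, Finset.sum_ite_eq', Finset.mem_univ, if_true,
    ite_mul, zero_mul, one_mul, Finset.sum_ite_eq, Finset.sum_ite_eq']
  simp only [Finset.sum_ite_irrel, Finset.sum_const_zero, Finset.sum_ite_eq,
    Finset.mem_univ, if_true, hc1, hc2]
  rw [show (∑ x : Fin N, B x b * B x a) = ∑ x, B x a * B x b from
    Finset.sum_congr rfl (fun x _ => mul_comm _ _)]
  by_cases hab : a = b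
  · subst hab; simp only [if_pos rfl]; ring
  · rw [if_neg hab, if_neg (Ne.symm hab)]; ring

/-- Laplacian decomposition for a doubly stochastic matrix `B` with columns `b_n`:
`I − BᵀB = ∑_{n<m} (b_n^T b_m)(e_n − e_m)(e_n − e_m)^T`, with diagonal entries
`∑_{m≠n} b_n^T b_m` and off-diagonal entries `−b_n^T b_m`. -/
theorem doubly_stochastic_laplacian_decomposition {N : ℕ}
    (B : Matrix (Fin N) (Fin N) ℝ)
    (hpos : ∀ k n, 0 ≤ B k n)
    (hrow : ∀ k, ∑ n, B k n = 1)
    (hcol : ∀ n, ∑ k, B k n = 1) :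
    (1 - B.transpose * B =
        ∑ q ∈ Finset.univ.filter (fun q : Fin N × Fin N => q.1 < q.2),
          (∑ i, B i q.1 * B i q.2) •
            Matrix.vecMulVec
              (fun i => (if i = q.1 then (1 : ℝ) else 0) - if i = q.2 then 1 else 0)
              (fun i => (if i = q.1 then (1 : ℝ) else 0) - if i = q.2 then 1 else 0)) ∧
      (∀ n, (1 - B.transpose * B) n n =
        ∑ m ∈ Finset.univ.filter (fun m => m ≠ n), ∑ i, B i n * B i m) ∧
      (∀ n m, n ≠ m → (1 - B.transpose * B) n m = -(∑ i, B i n * B i m)) := by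
  have hentry : ∀ a b, (1 - B.transpose * B) a b =
      (if a = b then (1:ℝ) else 0) - ∑ i, B i a * B i b := by
    intro a b
    simp [Matrix.sub_apply, Matrix.one_apply, Matrix.mul_apply, Matrix.transpose_apply]
  refine ⟨?_, ?_, ?_⟩
  · ext a b
    rw [hentry a b, Matrix.sum_apply]
    have hS := half_sum_aux (fun q : Fin N × Fin N =>
        (∑ i, B i q.1 * B i q.2) *
        (((if a = q.1 then (1:ℝ) else 0) - if a = q.2 then 1 else 0) *
         ((if b = q.1 then (1:ℝ) else 0) - if b = q.2 then 1 else 0)))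
      (by
        intro n m
        simp only
        rw [show (∑ i, B i n * B i m) = ∑ i, B i m * B i n from
          Finset.sum_congr rfl (fun x _ => mul_comm _ _)]
        ring)
      (by intro n; simp only; ring)
    rw [key_sum_aux B hrow hcol a b] at hS
    have hrw : ∀ q ∈ Finset.univ.filter (fun q : Fin N × Fin N => q.1 < q.2),
        ((∑ i, B i q.1 * B i q.2) •
            Matrix.vecMulVec
              (fun i => (if i = q.1 then (1 : ℝ) else 0) - if i = q.2 then 1 else 0)
              (fun i => (if i = q.1 then (1 : ℝ) else 0) - if i = q.2 then 1 else 0)) a b =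
        (∑ i, B i q.1 * B i q.2) *
        (((if a = q.1 then (1:ℝ) else 0) - if a = q.2 then 1 else 0) *
         ((if b = q.1 then (1:ℝ) else 0) - if b = q.2 then 1 else 0)) := by
      intro q _
      simp [Matrix.smul_apply, Matrix.vecMulVec_apply, mul_comm]
    rw [Finset.sum_congr rfl hrw]
    linarith
  · intro n
    rw [hentry n n, if_pos rfl, Finset.filter_ne', Finset.sum_erase_eq_sub (Finset.mem_univ n)]
    have hc1 : ∑ m, ∑ i, B i n * B i m = 1 := by
      rw [Finset.sum_comm]
      simp only [← Finset.mul_sum, hrow, mul_one, hcol]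
    rw [hc1]
  · intro n m hnm
    rw [hentry n m, if_neg hnm, zero_sub]
end

section
/- Let τ_1,...,τ_L be distinct real numbers and β_1,...,β_L nonzero complex numbers, with N ≥ 2L. Define a_ℓ ∈ ℂ^N by (a_ℓ)_n = e^{−j2π(n−1)τ_ℓ/N} and ȧ_ℓ = Diag{−j2π(n−1)/N} a_ℓ. Then the N×3L matrix H = [β_1 ȧ_1,...,β_L ȧ_L, a_1,...,a_L, j a_1,...,j a_L], viewed as a real-linear map on ℝ^{3L}, is injective; equivalently, Hd = 0 for d ∈ ℝ^{3L} implies d = 0. -/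
open Polynomial Finset

lemma sum_deriv (g : Polynomial ℂ) (x : ℂ) {n : ℕ} (hg : g.natDegree < n) :
    ∑ i ∈ Finset.range n, (i : ℂ) * g.coeff i * x ^ i
      = x * (Polynomial.derivative g).eval x := by
  obtain ⟨m, rfl⟩ : ∃ m, n = m + 1 := ⟨n - 1, (Nat.succ_pred_eq_of_pos (Nat.pos_of_ne_zero (by rintro rfl; omega))).symm⟩
  have hd : (Polynomial.derivative g).natDegree < m + 1 :=
    lt_of_le_of_lt (Polynomial.natDegree_derivative_le g) (by omega)
  rw [Polynomial.eval_eq_sum_range' hd, Finset.mul_sum]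
  rw [Finset.sum_range_succ']
  simp only [Polynomial.coeff_derivative]
  rw [Finset.sum_range_succ]
  have : g.coeff (m+1) = 0 := Polynomial.coeff_eq_zero_of_natDegree_lt hg
  simp [this]
  refine Finset.sum_congr rfl fun i _ => ?_
  ring

lemma key_identity {N L : ℕ} (x c e : Fin L → ℂ)
    (h : ∀ n : Fin N, ∑ l, (c l + (n : ℕ) * e l) * x l ^ (n : ℕ) = 0)
    (g : Polynomial ℂ) (hg : g.natDegree < N) :
    ∑ l, (c l * g.eval (x l)
        + e l * (x l * (Polynomial.derivative g).eval (x l))) = 0 := by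
  have step : ∀ l, c l * g.eval (x l) + e l * (x l * (Polynomial.derivative g).eval (x l))
      = ∑ n ∈ Finset.range N, g.coeff n * ((c l + (n : ℕ) * e l) * x l ^ n) := by
    intro l
    rw [Polynomial.eval_eq_sum_range' hg, ← sum_deriv g (x l) hg,
      Finset.mul_sum, Finset.mul_sum, ← Finset.sum_add_distrib]
    refine Finset.sum_congr rfl fun i _ => ?_
    ring
  simp only [step]
  rw [Finset.sum_comm]
  refine Finset.sum_eq_zero fun n hn => ?_
  rw [← Finset.mul_sum]
  have := h ⟨n, Finset.mem_range.mp hn⟩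
  simp only at this
  rw [this, mul_zero]

lemma deriv_sq_root (a : ℂ) (r : Polynomial ℂ) :
    (Polynomial.derivative ((X - C a)^2 * r)).eval a = 0 := by
  simp [Polynomial.derivative_mul, Polynomial.derivative_pow]

lemma main_alg {N L : ℕ} (hNL : 2 * L ≤ N) (x c e : Fin L → ℂ)
    (hx0 : ∀ l, x l ≠ 0) (hxinj : Function.Injective x)
    (h : ∀ n : Fin N, ∑ l, (c l + (n : ℕ) * e l) * x l ^ (n : ℕ) = 0) :
    ∀ l, c l = 0 ∧ e l = 0 := by
  intro l
  have hL : 1 ≤ L := l.pos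
  set q : Polynomial ℂ := ∏ k ∈ Finset.univ.erase l, (X - C (x k))^2 with hq
  have hqne : q ≠ 0 := by
    rw [hq]
    exact Finset.prod_ne_zero_iff.mpr
      (fun k _ => pow_ne_zero 2 (Polynomial.X_sub_C_ne_zero (x k)))
  have hqdeg : q.natDegree = 2 * (L - 1) := by
    rw [hq, Polynomial.natDegree_prod _ _
      (fun k _ => pow_ne_zero 2 (Polynomial.X_sub_C_ne_zero (x k)))]
    simp [Polynomial.natDegree_pow, Polynomial.natDegree_X_sub_C,
      Finset.card_erase_of_mem, mul_comm]
  have hqval : q.eval (x l) ≠ 0 := by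
    rw [hq, Polynomial.eval_prod]
    refine Finset.prod_ne_zero_iff.mpr fun k hk => ?_
    have : x l ≠ x k := fun hxx => (Finset.mem_erase.mp hk).1 (hxinj hxx.symm)
    simp [sub_ne_zero.mpr this]
  have hfact : ∀ k, k ≠ l → ∃ r : Polynomial ℂ, q = (X - C (x k))^2 * r := by
    intro k hk
    exact ⟨_, (Finset.mul_prod_erase _ _ (Finset.mem_erase.mpr ⟨hk, Finset.mem_univ k⟩)).symm⟩
  have hqdeg' : q.natDegree < N := by rw [hqdeg]; omega
  -- Step 1 : e l = 0
  have he : e l = 0 := by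
    have hdeg : ((X - C (x l)) * q).natDegree < N := by
      rw [Polynomial.natDegree_mul (Polynomial.X_sub_C_ne_zero (x l)) hqne,
        hqdeg, Polynomial.natDegree_X_sub_C]
      omega
    have key1 := key_identity x c e h ((X - C (x l)) * q) hdeg
    rw [Finset.sum_eq_single_of_mem l (Finset.mem_univ l)] at key1
    · have heval : ((X - C (x l)) * q).eval (x l) = 0 := by simp
      have hder : (Polynomial.derivative ((X - C (x l)) * q)).eval (x l) = q.eval (x l) := by
        rw [Polynomial.derivative_mul]
        simp
      rw [heval, hder, mul_zero, zero_add] at key1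
      exact (mul_eq_zero.mp key1).resolve_right (mul_ne_zero (hx0 l) hqval)
    · intro k _ hk
      obtain ⟨r, hr⟩ := hfact k hk
      have hqk : (X - C (x l)) * q = (X - C (x k))^2 * ((X - C (x l)) * r) := by
        rw [hr]; ring
      rw [hqk, deriv_sq_root]
      simp [hr]
  -- Step 2 : c l = 0
  refine ⟨?_, he⟩
  have key2 := key_identity x c e h q hqdeg'
  rw [Finset.sum_eq_single_of_mem l (Finset.mem_univ l)] at key2
  · rw [he, zero_mul, add_zero] at key2
    exact (mul_eq_zero.mp key2).resolve_right hqval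
  · intro k _ hk
    obtain ⟨r, hr⟩ := hfact k hk
    rw [hr, deriv_sq_root]
    simp

/-- Injectivity (full real rank) of the delay-amplitude Jacobian: for distinct delays
`τ_ℓ` (distinct modulo `N`), nonzero amplitudes `β_ℓ`, and `N ≥ 2L`, the matrix
`H = [β_1 ȧ_1, …, β_L ȧ_L, a_1, …, a_L, j a_1, …, j a_L]` with
`(a_ℓ)_n = e^{−j2π(n−1)τ_ℓ/N}` and `ȧ_ℓ = Diag{−j2π(n−1)/N} a_ℓ`, viewed as a
real-linear map on `ℝ^{3L}`, is injective: `H d = 0` implies `d = 0`. -/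
theorem delay_jacobian_injective {N L : ℕ} (hNL : 2 * L ≤ N)
    (τ : Fin L → ℝ) (β : Fin L → ℂ)
    (hτ : ∀ k l, k ≠ l → ¬ ∃ z : ℤ, τ k - τ l = (N : ℝ) * z)
    (hβ : ∀ l, β l ≠ 0)
    (dτ da db : Fin L → ℝ)
    (h : ∀ n : Fin N,
      ∑ l, ((dτ l : ℂ) *
            (β l * (-(2 * Real.pi * Complex.I * ((n : ℕ) : ℂ)) / N) *
              Complex.exp (-(2 * Real.pi * Complex.I * ((n : ℕ) : ℂ) * (τ l : ℂ)) / N))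
          + (da l : ℂ) *
              Complex.exp (-(2 * Real.pi * Complex.I * ((n : ℕ) : ℂ) * (τ l : ℂ)) / N)
          + (db l : ℂ) *
              (Complex.I *
                Complex.exp (-(2 * Real.pi * Complex.I * ((n : ℕ) : ℂ) * (τ l : ℂ)) / N)))
        = 0) :
    dτ = 0 ∧ da = 0 ∧ db = 0 := by
  rcases Nat.eq_zero_or_pos L with rfl | hL
  · exact ⟨Subsingleton.elim _ _, Subsingleton.elim _ _, Subsingleton.elim _ _⟩
  have hN : (N : ℂ) ≠ 0 := Nat.cast_ne_zero.mpr (by omega)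
  have h2pi : (2 : ℂ) * Real.pi * Complex.I ≠ 0 := by
    simp [Real.pi_ne_zero, Complex.I_ne_zero, Complex.ofReal_ne_zero]
  set x : Fin L → ℂ := fun l => Complex.exp (-(2 * Real.pi * Complex.I * (τ l : ℂ)) / N) with hxdef
  set c : Fin L → ℂ := fun l => (da l : ℂ) + (db l : ℂ) * Complex.I with hcdef
  set e : Fin L → ℂ := fun l => (dτ l : ℂ) * (β l * (-(2 * Real.pi * Complex.I) / N)) with hedef
  have hx0 : ∀ l, x l ≠ 0 := fun l => Complex.exp_ne_zero _
  have hxinj : Function.Injective x := by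
    intro k l hkl
    by_contra hne
    rw [hxdef] at hkl
    simp only [Complex.exp_eq_exp_iff_exists_int] at hkl
    obtain ⟨m, hm⟩ := hkl
    apply hτ k l hne
    refine ⟨-m, ?_⟩
    have hm2 := congrArg (fun z => z * (N:ℂ)) hm
    simp only [add_mul, div_mul_cancel₀ _ hN] at hm2
    have hmain : (2 * (Real.pi:ℂ) * Complex.I) * ((τ k:ℂ) - τ l)
        = (2 * (Real.pi:ℂ) * Complex.I) * ((N:ℂ) * (-m)) := by
      linear_combination -hm2
    have := mul_left_cancel₀ h2pi hmain
    exact_mod_cast this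
  have h' : ∀ n : Fin N, ∑ l, (c l + ((n : ℕ) : ℂ) * e l) * x l ^ (n : ℕ) = 0 := by
    intro n
    rw [← h n]
    refine Finset.sum_congr rfl fun l _ => ?_
    have hE : x l ^ (n : ℕ)
        = Complex.exp (-(2 * Real.pi * Complex.I * ((n : ℕ) : ℂ) * (τ l : ℂ)) / N) := by
      rw [hxdef, ← Complex.exp_nat_mul]
      congr 1
      ring
    rw [hE]
    simp only [hcdef, hedef]
    ring
  have hce := main_alg hNL x c e hx0 hxinj h'
  refine ⟨funext fun l => ?_, funext fun l => ?_, funext fun l => ?_⟩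
  · have he := (hce l).2
    simp only [hedef] at he
    have hne : β l * (-(2 * Real.pi * Complex.I) / (N:ℂ)) ≠ 0 :=
      mul_ne_zero (hβ l) (div_ne_zero (neg_ne_zero.mpr h2pi) hN)
    have : (dτ l : ℂ) = 0 := (mul_eq_zero.mp he).resolve_right hne
    exact_mod_cast this
  · have hc := (hce l).1
    simp only [hcdef] at hc
    simpa using congrArg Complex.re hc
  · have hc := (hce l).1
    simp only [hcdef] at hc
    simpa using congrArg Complex.im hc
end
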